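/- arXiv:2308.14964 — 4 statements merged into one kernel-verified Lean document; each statement's English description precedes it below -/
import Mathlib

section
/- Let M be a compact metric space and suppose there exist real numbers ρ < 1, ρ > 0 and N ∈ ℕ such that for every pair of points x, x' ∈ M there is a ρ-chain of length N from x to x'. Then M is linearly connected; moreover one may take the linear connectivity constant to be ν = 2Nρ/(1−ρ), i.e., every pair of points x, x' ∈ M is contained in a compact connected subset of M of diameter at most (2Nρ/(1−ρ))·d(x,x'). -/
/-- Iterated chain refinement: level `k+1` interpolates a `B`-chain between consecutive
points of level `k`. -/
noncomputable def cIter {M : Type*} (x x' : M) (N : ℕ) (B : M → M → ℕ → M) : ℕ → ℕ → M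
  | 0 => fun j => if j = 0 then x else x'
  | (k+1) => fun j => B (cIter x x' N B k (j / N)) (cIter x x' N B k (j / N + 1)) (j % N)

/-- A compact set in which every two points are joined, for every `ε > 0`, by an `ε`-chain
inside the set, is preconnected. -/
theorem isPreconnected_of_eps_chains {M : Type*} [MetricSpace M] {S : Set M}
    (hS : IsCompact S)
    (h : ∀ ε > (0:ℝ), ∀ p ∈ S, ∀ q ∈ S, ∃ n : ℕ, ∃ f : ℕ → M, f 0 = p ∧ f n = q ∧
      (∀ i, f i ∈ S) ∧ ∀ i < n, dist (f i) (f (i+1)) < ε) : IsPreconnected S := by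
  intro U V hU hV hUV ⟨p, hpS, hpU⟩ ⟨q, hqS, hqV⟩
  by_contra hne
  rw [Set.not_nonempty_iff_eq_empty] at hne
  have hnot : ∀ a, a ∈ S → a ∈ U → a ∈ V → False := fun a h1 h2 h3 =>
    Set.eq_empty_iff_forall_notMem.mp hne a ⟨h1, h2, h3⟩
  have hqU : q ∈ Uᶜ := fun hqU => hnot q hqS hqU hqV
  set K : Set M := S ∩ Uᶜ with hK
  have hKclosed : IsClosed K := hS.isClosed.inter hU.isClosed_compl
  have hqK : q ∈ K := ⟨hqS, hqU⟩
  set A : Set M := S ∩ U with hA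
  have hAcomp : IsCompact A := by
    have hAeq : A = S ∩ Vᶜ := by
      apply Set.Subset.antisymm
      · rintro a ⟨haS, haU⟩
        exact ⟨haS, fun haV => hnot a haS haU haV⟩
      · rintro a ⟨haS, haV⟩
        rcases hUV haS with h1 | h1
        · exact ⟨haS, h1⟩
        · exact absurd h1 haV
    rw [hAeq]; exact hS.inter_right hV.isClosed_compl
  obtain ⟨a₀, ha₀, hmin⟩ := hAcomp.exists_isMinOn ⟨p, hpS, hpU⟩
    (Metric.continuous_infDist_pt K).continuousOn
  have ha₀K : a₀ ∉ K := fun h' => h'.2 ha₀.2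
  have hε : 0 < Metric.infDist a₀ K :=
    (hKclosed.notMem_iff_infDist_pos ⟨q, hqK⟩).mp ha₀K
  obtain ⟨n, f, hf0, hfn, hfS, hfstep⟩ := h _ hε p hpS q hqS
  have key : ∀ i, i ≤ n → f i ∈ A := by
    intro i
    induction i with
    | zero => intro _; rw [hf0]; exact ⟨hpS, hpU⟩
    | succ i ih =>
      intro hin
      have hiA := ih (by omega)
      by_contra hcon
      have hK' : f (i+1) ∈ K := ⟨hfS _, fun hU' => hcon ⟨hfS _, hU'⟩⟩
      have h1 : Metric.infDist a₀ K ≤ dist (f i) (f (i+1)) :=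
        le_trans (hmin hiA) (Metric.infDist_le_dist_of_mem hK')
      exact absurd (hfstep i (by omega)) (not_lt.mpr h1)
  have hq' := key n le_rfl
  rw [hfn] at hq'
  exact hnot q hq'.1 hq'.2 hqV

/-- If `M` is a compact metric space and there are `0 < ρ < 1` and `N : ℕ` such
that every pair of points `x, x'` is joined by a `ρ`-chain of length `N` (a sequence
`x = b 0, …, b N = x'` with consecutive distances at most `ρ * dist x x'`), then every pair of
points is contained in a compact connected subset of diameter at most
`(2 * N * ρ / (1 - ρ)) * dist x x'`. -/
theorem compact_linearly_connected_of_chains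
    {M : Type*} [MetricSpace M] [CompactSpace M]
    (ρ : ℝ) (hρ0 : 0 < ρ) (hρ1 : ρ < 1) (N : ℕ)
    (hchain : ∀ x x' : M, ∃ b : ℕ → M, b 0 = x ∧ b N = x' ∧
      ∀ j : ℕ, 1 ≤ j → j ≤ N → dist (b (j - 1)) (b j) ≤ ρ * dist x x') :
    ∀ x x' : M, ∃ S : Set M, IsCompact S ∧ IsConnected S ∧ x ∈ S ∧ x' ∈ S ∧
      Metric.diam S ≤ (2 * N * ρ / (1 - ρ)) * dist x x' := by
  intro x x'
  rcases Nat.eq_zero_or_pos N with hN | hN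
  · subst hN
    obtain ⟨b, hb0, hbN, -⟩ := hchain x x'
    have hxx : x = x' := by rw [← hb0, ← hbN]
    refine ⟨{x}, isCompact_singleton, isConnected_singleton, rfl, by rw [hxx]; rfl, ?_⟩
    simp
  · choose B hB0 hBN hBstep using hchain
    set d := dist x x' with hddef
    have hd0 : (0:ℝ) ≤ d := dist_nonneg
    have h1ρ : (0:ℝ) < 1 - ρ := by linarith
    set c := cIter x x' N B with hcdef
    -- partial sums along a chain
    have hpartial : ∀ p q : M, ∀ r, r ≤ N → dist p (B p q r) ≤ r * (ρ * dist p q) := by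
      intro p q r
      induction r with
      | zero => intro _; rw [hB0]; simp
      | succ r ih =>
        intro hr
        have h1 := hBstep p q (r+1) (by omega) hr
        simp only [Nat.add_sub_cancel] at h1
        calc dist p (B p q (r+1)) ≤ dist p (B p q r) + dist (B p q r) (B p q (r+1)) :=
              dist_triangle _ _ _
          _ ≤ r * (ρ * dist p q) + ρ * dist p q := add_le_add (ih (by omega)) h1
          _ = ((r:ℝ)+1) * (ρ * dist p q) := by ring
          _ = ((r+1 : ℕ) : ℝ) * (ρ * dist p q) := by push_cast; ring
    have hd_le : d ≤ (N:ℝ) * ρ * d := by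
      have h1 := hpartial x x' N le_rfl
      rw [hBN] at h1
      calc d = dist x x' := hddef
        _ ≤ (N:ℝ) * (ρ * dist x x') := h1
        _ = (N:ℝ) * ρ * d := by rw [← hddef]; ring
    -- c k 0 = x
    have hc0 : ∀ k, c k 0 = x := by
      intro k
      induction k with
      | zero => simp [hcdef, cIter]
      | succ k ih =>
        have e : c (k+1) 0 = B (c k (0 / N)) (c k (0 / N + 1)) (0 % N) := rfl
        rw [e, Nat.zero_div, Nat.zero_mod, hB0, ih]
    -- consecutive step bound at level k
    have hstep : ∀ k j, dist (c k j) (c k (j+1)) ≤ ρ^k * d := by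
      intro k
      induction k with
      | zero =>
        intro j
        rcases Nat.eq_zero_or_pos j with hj | hj
        · subst hj
          simp [hcdef, cIter, hddef]
        · have hj1 : j ≠ 0 := by omega
          have hj2 : j + 1 ≠ 0 := by omega
          simp [hcdef, cIter, hj1, hj2, hd0]
      | succ k ih =>
        intro j
        have hjm : j % N < N := Nat.mod_lt _ hN
        have hmd := Nat.mod_add_div j N
        have e1 : c (k+1) j = B (c k (j/N)) (c k (j/N+1)) (j % N) := rfl
        rcases Nat.lt_or_ge (j % N + 1) N with hc1 | hc1
        · -- same block
          have hdiv : (j+1) / N = j / N ∧ (j+1) % N = j % N + 1 :=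
            (Nat.div_mod_unique hN).mpr ⟨by omega, hc1⟩
          have e2 : c (k+1) (j+1) = B (c k (j/N)) (c k (j/N+1)) (j % N + 1) := by
            have e0 : c (k+1) (j+1) = B (c k ((j+1)/N)) (c k ((j+1)/N+1)) ((j+1) % N) := rfl
            rw [e0, hdiv.1, hdiv.2]
          rw [e1, e2]
          have h1 := hBstep (c k (j/N)) (c k (j/N+1)) (j % N + 1) (by omega) hc1.le
          simp only [Nat.add_sub_cancel] at h1
          calc dist (B (c k (j/N)) (c k (j/N+1)) (j % N))
                (B (c k (j/N)) (c k (j/N+1)) (j % N + 1))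
              ≤ ρ * dist (c k (j/N)) (c k (j/N+1)) := h1
            _ ≤ ρ * (ρ^k * d) := mul_le_mul_of_nonneg_left (ih _) hρ0.le
            _ = ρ^(k+1) * d := by ring
        · -- crossing a block boundary
          have hr : j % N + 1 = N := by omega
          have hNN : N * (j/N + 1) = N * (j/N) + N := by ring
          have hdiv : (j+1) / N = j / N + 1 ∧ (j+1) % N = 0 :=
            (Nat.div_mod_unique hN).mpr ⟨by omega, hN⟩
          have e1' : c (k+1) j = B (c k (j/N)) (c k (j/N+1)) (N - 1) := by
            rw [e1]; congr 1; omega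
          have e2 : c (k+1) (j+1) = B (c k (j/N)) (c k (j/N+1)) N := by
            have e0 : c (k+1) (j+1) = B (c k ((j+1)/N)) (c k ((j+1)/N+1)) ((j+1) % N) := rfl
            rw [e0, hdiv.1, hdiv.2, hB0, hBN]
          rw [e1', e2]
          have h1 := hBstep (c k (j/N)) (c k (j/N+1)) N (by omega) le_rfl
          calc dist (B (c k (j/N)) (c k (j/N+1)) (N-1)) (B (c k (j/N)) (c k (j/N+1)) N)
              ≤ ρ * dist (c k (j/N)) (c k (j/N+1)) := h1
            _ ≤ ρ * (ρ^k * d) := mul_le_mul_of_nonneg_left (ih _) hρ0.le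
            _ = ρ^(k+1) * d := by ring
    -- nesting
    have hnest : ∀ k j, c (k+1) (N*j) = c k j := by
      intro k j
      have e : c (k+1) (N*j) = B (c k ((N*j)/N)) (c k ((N*j)/N+1)) ((N*j) % N) := rfl
      rw [e, Nat.mul_div_cancel_left _ hN, Nat.mul_mod_right, hB0]
    have hnest' : ∀ m k j, c (k+m) (j * N^m) = c k j := by
      intro m
      induction m with
      | zero => intro k j; simp
      | succ m ih =>
        intro k j
        have h1 : k + (m+1) = (k+1) + m := by omega
        have h2 : j * N^(m+1) = (N*j) * N^m := by ring
        rw [h1, h2, ih (k+1) (N*j), hnest k j]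
    -- distance from x
    have hdx : ∀ k j, dist (c (k+1) j) x ≤ (N:ℝ)*ρ*d * ∑ m ∈ Finset.range (k+1), ρ^m := by
      intro k
      induction k with
      | zero =>
        intro j
        rw [Finset.sum_range_one, pow_zero]
        rcases Nat.eq_zero_or_pos (j / N) with hj | hj
        · have e : c 1 j = B x x' (j % N) := by
            have e0 : c 1 j = B (c 0 (j/N)) (c 0 (j/N+1)) (j%N) := rfl
            rw [e0, hj]
            have e1 : c 0 0 = x := by simp [hcdef, cIter]
            have e2 : c 0 1 = x' := by simp [hcdef, cIter]
            rw [e1, e2]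
          rw [e, dist_comm]
          have hcast : ((j % N : ℕ):ℝ) ≤ (N:ℝ) := by exact_mod_cast (Nat.mod_lt _ hN).le
          calc dist x (B x x' (j%N)) ≤ ((j%N : ℕ) : ℝ) * (ρ * dist x x') :=
                hpartial x x' _ (Nat.mod_lt _ hN).le
            _ = ((j%N : ℕ) : ℝ) * (ρ * d) := by rw [← hddef]
            _ ≤ (N:ℝ) * (ρ * d) :=
                mul_le_mul_of_nonneg_right hcast (mul_nonneg hρ0.le hd0)
            _ = (N:ℝ)*ρ*d * 1 := by ring
        · have e : c 1 j = B x' x' (j % N) := by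
            have e0 : c 1 j = B (c 0 (j/N)) (c 0 (j/N+1)) (j%N) := rfl
            rw [e0]
            have h1 : j / N ≠ 0 := by omega
            have h2 : j / N + 1 ≠ 0 := by omega
            have e1 : c 0 (j/N) = x' := by simp [hcdef, cIter, h1]
            have e2 : c 0 (j/N+1) = x' := by simp [hcdef, cIter, h2]
            rw [e1, e2]
          have hx'B : dist (c 1 j) x' ≤ 0 := by
            rw [e, dist_comm]
            have h1 := hpartial x' x' (j%N) (Nat.mod_lt _ hN).le
            simpa using h1
          calc dist (c 1 j) x ≤ dist (c 1 j) x' + dist x' x := dist_triangle _ _ _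
            _ ≤ 0 + d := add_le_add hx'B (by rw [dist_comm, ← hddef])
            _ ≤ (N:ℝ)*ρ*d * 1 := by rw [mul_one]; linarith [hd_le]
      | succ k ih =>
        intro j
        have e : c (k+2) j = B (c (k+1) (j/N)) (c (k+1) (j/N+1)) (j%N) := rfl
        have hcast : ((j % N : ℕ):ℝ) ≤ (N:ℝ) := by exact_mod_cast (Nat.mod_lt _ hN).le
        calc dist (c (k+2) j) x
            ≤ dist (c (k+2) j) (c (k+1) (j/N)) + dist (c (k+1) (j/N)) x := dist_triangle _ _ _
          _ ≤ (N:ℝ) * (ρ * (ρ^(k+1) * d)) + (N:ℝ)*ρ*d * ∑ m ∈ Finset.range (k+1), ρ^m := by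
              refine add_le_add ?_ (ih _)
              rw [e, dist_comm]
              calc dist (c (k+1) (j/N)) (B (c (k+1) (j/N)) (c (k+1) (j/N+1)) (j%N))
                  ≤ ((j%N : ℕ) : ℝ) * (ρ * dist (c (k+1) (j/N)) (c (k+1) (j/N+1))) :=
                    hpartial _ _ _ (Nat.mod_lt _ hN).le
                _ ≤ (N:ℝ) * (ρ * (ρ^(k+1) * d)) := by
                    refine mul_le_mul hcast
                      (mul_le_mul_of_nonneg_left (hstep (k+1) (j/N)) hρ0.le)
                      (mul_nonneg hρ0.le dist_nonneg) (by positivity)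
          _ = (N:ℝ)*ρ*d * ∑ m ∈ Finset.range (k+2), ρ^m := by
              have hss : ∑ m ∈ Finset.range (k+2), ρ^m
                  = (∑ m ∈ Finset.range (k+1), ρ^m) + ρ^(k+1) := Finset.sum_range_succ _ _
              rw [hss]
              ring
    -- uniform bound
    have hsum : ∀ n : ℕ, ∑ m ∈ Finset.range n, ρ^m ≤ 1/(1-ρ) := by
      intro n
      rw [le_div_iff₀ h1ρ]
      have h1 := geom_sum_mul ρ n
      have hpn : (0:ℝ) ≤ ρ^n := by positivity
      nlinarith [h1]
    have hT : ∀ k j, dist (c (k+1) j) x ≤ (N:ℝ)*ρ*d/(1-ρ) := by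
      intro k j
      calc dist (c (k+1) j) x ≤ (N:ℝ)*ρ*d * ∑ m ∈ Finset.range (k+1), ρ^m := hdx k j
        _ ≤ (N:ℝ)*ρ*d * (1/(1-ρ)) :=
            mul_le_mul_of_nonneg_left (hsum _) (by positivity)
        _ = (N:ℝ)*ρ*d/(1-ρ) := by ring
    -- the set
    set S := closure (⋃ k, Set.range (c (k+1))) with hSdef
    have hmemS : ∀ k j, c (k+1) j ∈ S := fun k j =>
      subset_closure (Set.mem_iUnion.mpr ⟨k, Set.mem_range_self j⟩)
    have hxS : x ∈ S := by have := hmemS 0 0; rwa [hc0 1] at this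
    have hc1N : c 1 N = x' := by
      have h1 := hnest' 1 0 1
      simp only [pow_one, one_mul] at h1
      rw [h1]
      simp [hcdef, cIter]
    have hx'S : x' ∈ S := by have := hmemS 0 N; rwa [hc1N] at this
    have hScompact : IsCompact S := isClosed_closure.isCompact
    have hSball : S ⊆ Metric.closedBall x ((N:ℝ)*ρ*d/(1-ρ)) := by
      apply closure_minimal _ Metric.isClosed_closedBall
      rintro y hy
      simp only [Set.mem_iUnion, Set.mem_range] at hy
      obtain ⟨k, j, rfl⟩ := hy
      exact Metric.mem_closedBall.mpr (hT k j)
    refine ⟨S, hScompact, ⟨⟨x, hxS⟩, ?_⟩, hxS, hx'S, ?_⟩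
    · -- preconnected via ε-chains
      apply isPreconnected_of_eps_chains hScompact
      intro ε hε p hp q hq
      obtain ⟨p', hp'mem, hpp'⟩ := Metric.mem_closure_iff.mp hp ε hε
      obtain ⟨q', hq'mem, hqq'⟩ := Metric.mem_closure_iff.mp hq ε hε
      simp only [Set.mem_iUnion, Set.mem_range] at hp'mem hq'mem
      obtain ⟨k, i, hki⟩ := hp'mem
      obtain ⟨m, jj, hmj⟩ := hq'mem
      obtain ⟨L₀, hL₀⟩ : ∃ L₀ : ℕ, ρ^L₀ * d < ε := by
        rcases eq_or_lt_of_le hd0 with hd | hd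
        · exact ⟨0, by rw [← hd]; simpa using hε⟩
        · obtain ⟨n, hn⟩ := exists_pow_lt_of_lt_one (div_pos hε hd) hρ1
          exact ⟨n, (lt_div_iff₀ hd).mp hn⟩
      set L := max (max (k+1) (m+1)) L₀ with hLdef
      have hLd : ρ^L * d < ε := by
        refine lt_of_le_of_lt ?_ hL₀
        exact mul_le_mul_of_nonneg_right
          (pow_le_pow_of_le_one hρ0.le hρ1.le (le_max_right _ _)) hd0
      have hstepL : ∀ u v : ℕ, (v = u+1 ∨ u = v+1 ∨ u = v) → dist (c L u) (c L v) < ε := by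
        intro u v hcase
        rcases hcase with h|h|h
        · subst h; exact lt_of_le_of_lt (hstep L u) hLd
        · subst h; rw [dist_comm]; exact lt_of_le_of_lt (hstep L v) hLd
        · subst h; simpa using hε
      have hkL : k + 1 ≤ L := le_trans (le_max_left _ _) (le_max_left _ _)
      have hmL : m + 1 ≤ L := le_trans (le_max_right _ _) (le_max_left _ _)
      set a := i * N ^ (L - (k+1)) with hadef
      set b := jj * N ^ (L - (m+1)) with hbdef
      have hca : c L a = p' := by
        have h1 := hnest' (L - (k+1)) (k+1) i
        rw [Nat.add_sub_cancel' hkL] at h1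
        rw [hadef, h1, hki]
      have hcb : c L b = q' := by
        have h1 := hnest' (L - (m+1)) (m+1) jj
        rw [Nat.add_sub_cancel' hmL] at h1
        rw [hbdef, h1, hmj]
      have hLpos : 1 ≤ L := le_trans (by omega) hkL
      have hmemL : ∀ u, c L u ∈ S := by
        intro u
        have h1 := hmemS (L-1) u
        rwa [Nat.sub_add_cancel hLpos] at h1
      set f : ℕ → M := fun idx =>
        if idx = 0 then p else if idx ≤ a + 1 then c L (a - (idx - 1))
        else if idx ≤ a + 1 + b then c L (idx - (a+1)) else q with hfdef
      refine ⟨a + b + 2, f, by simp [hfdef], ?_, ?_, ?_⟩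
      · simp only [hfdef]
        rw [if_neg (by omega), if_neg (by omega), if_neg (by omega)]
      · intro idx
        simp only [hfdef]
        split_ifs
        · exact hp
        · exact hmemL _
        · exact hmemL _
        · exact hq
      · intro idx hidx
        have hcases : idx = 0 ∨ (1 ≤ idx ∧ idx ≤ a) ∨ (a+1 ≤ idx ∧ idx ≤ a+b) ∨
            idx = a+1+b := by omega
        rcases hcases with h0 | ⟨he1, he2⟩ | ⟨he1, he2⟩ | h0
        · subst h0
          have e1 : f 0 = p := by simp [hfdef]
          have e2 : f 1 = c L a := by
            simp only [hfdef]
            rw [if_neg (by omega), if_pos (by omega)]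
            congr 1
          rw [e1, e2, hca]
          exact hpp'
        · have e1 : f idx = c L (a - idx + 1) := by
            simp only [hfdef]
            rw [if_neg (by omega), if_pos (by omega)]
            congr 1
            omega
          have e2 : f (idx+1) = c L (a - idx) := by
            simp only [hfdef]
            rw [if_neg (by omega), if_pos (by omega)]
            congr 1
          rw [e1, e2]
          exact hstepL _ _ (Or.inr (Or.inl rfl))
        · have e1 : f idx = c L (idx - (a+1)) := by
            simp only [hfdef]
            rw [if_neg (by omega)]
            by_cases hb : idx ≤ a + 1
            · rw [if_pos hb]; congr 1; omega
            · rw [if_neg hb, if_pos (by omega)]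
          have e2 : f (idx+1) = c L (idx - (a+1) + 1) := by
            simp only [hfdef]
            rw [if_neg (by omega), if_neg (by omega), if_pos (by omega)]
            congr 1
            omega
          rw [e1, e2]
          exact hstepL _ _ (Or.inl rfl)
        · subst h0
          have e1 : f (a+1+b) = c L b := by
            simp only [hfdef]
            rw [if_neg (by omega)]
            by_cases hb : a + 1 + b ≤ a + 1
            · rw [if_pos hb]; congr 1; omega
            · rw [if_neg hb, if_pos (by omega)]; congr 1; omega
          have e2 : f (a+1+b+1) = q := by
            simp only [hfdef]
            rw [if_neg (by omega), if_neg (by omega), if_neg (by omega)]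
          rw [e1, e2, hcb, dist_comm]
          exact hqq'
    · -- diameter bound
      refine Metric.diam_le_of_forall_dist_le (by positivity) ?_
      intro p hp q hq
      have h1 := Metric.mem_closedBall.mp (hSball hp)
      have h2 := Metric.mem_closedBall.mp (hSball hq)
      calc dist p q ≤ dist p x + dist x q := dist_triangle _ _ _
        _ ≤ (N:ℝ)*ρ*d/(1-ρ) + (N:ℝ)*ρ*d/(1-ρ) := by
            refine add_le_add h1 ?_
            rw [dist_comm]; exact h2
        _ = (2 * N * ρ / (1 - ρ)) * d := by ring
end

section
/- Let M be a complete metric space and suppose there exist real numbers ρ < 1, ρ > 0 and N ∈ ℕ such that for every pair of points x, x' ∈ M there is a ρ-chain of length N from x to x'. Then, with ν = 2Nρ/(1−ρ), any two points x, x' ∈ M are joined by a continuous path γ : [0,1] → M with γ(0) = x, γ(1) = x' whose image has diameter at most ν·d(x,x'). -/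
open Filter Metric Set Topology

/-- Auxiliary grid of points: `gridAux c x x' N m k` is the point of the `m`-th refinement
at position `k / N^m`. -/
private noncomputable def gridAux {M : Type*} (c : M → M → ℕ → M) (x x' : M) (N : ℕ) :
    ℕ → ℕ → M
  | 0, k => if k = 0 then x else x'
  | (m+1), k => c (gridAux c x x' N m (k / N)) (gridAux c x x' N m (k / N + 1)) (k % N)

set_option maxHeartbeats 1000000 in
/-- If `M` is a complete metric space and there are `0 < ρ < 1` and `N : ℕ` such
that every pair of points `x, x'` is joined by a `ρ`-chain of length `N` (a sequence
`x = b 0, …, b N = x'` with consecutive distances at most `ρ * dist x x'`), then, with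
`ν = 2 * N * ρ / (1 - ρ)`, any two points `x, x'` are joined by a continuous path
`γ : [0,1] → M` from `x` to `x'` whose image has diameter at most `ν * dist x x'`. -/
theorem path_connected_of_chains_complete
    {M : Type*} [MetricSpace M] [CompleteSpace M]
    (ρ : ℝ) (hρ0 : 0 < ρ) (hρ1 : ρ < 1) (N : ℕ)
    (hchain : ∀ x x' : M, ∃ b : ℕ → M, b 0 = x ∧ b N = x' ∧
      ∀ j : ℕ, 1 ≤ j → j ≤ N → dist (b (j - 1)) (b j) ≤ ρ * dist x x') :
    ∀ x x' : M, ∃ γ : Path x x',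
      Metric.diam (Set.range (γ : unitInterval → M)) ≤ (2 * N * ρ / (1 - ρ)) * dist x x' := by
  classical
  intro x x'
  have h1ρ : (0:ℝ) < 1 - ρ := by linarith
  rcases Nat.eq_zero_or_pos N with hN | hN
  · -- degenerate case `N = 0`: the space is a single point
    subst hN
    obtain ⟨b, hb0, hbN, -⟩ := hchain x x'
    have hxx : x = x' := by rw [← hb0, ← hbN]
    subst hxx
    refine ⟨Path.refl x, ?_⟩
    rw [Path.refl_range]
    simp
  -- main case `N ≥ 1`
  set d := dist x x' with hd
  have hd0 : 0 ≤ d := dist_nonneg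
  have hN1 : (1:ℝ) ≤ (N:ℝ) := by exact_mod_cast hN
  set c : M → M → ℕ → M := fun a b => (hchain a b).choose with hc
  have hc0 : ∀ a b : M, c a b 0 = a := fun a b => (hchain a b).choose_spec.1
  have hcN : ∀ a b : M, c a b N = b := fun a b => (hchain a b).choose_spec.2.1
  have hcstep : ∀ a b : M, ∀ j, 1 ≤ j → j ≤ N →
      dist (c a b (j-1)) (c a b j) ≤ ρ * dist a b :=
    fun a b => (hchain a b).choose_spec.2.2
  set g := gridAux c x x' N with hg
  have hgz : ∀ k, g 0 k = if k = 0 then x else x' := fun k => rfl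
  have hgs : ∀ m k, g (m+1) k = c (g m (k/N)) (g m (k/N+1)) (k % N) := fun m k => rfl
  have L1 : ∀ m, g m 0 = x := by
    intro m
    induction m with
    | zero => simp [hgz]
    | succ m ih => rw [hgs]; simp [Nat.zero_div, Nat.zero_mod, hc0, ih]
  have L2 : ∀ m, g m (N^m) = x' := by
    intro m
    induction m with
    | zero => simp [hgz]
    | succ m ih =>
      rw [hgs]
      have h1 : N^(m+1) / N = N^m := by rw [pow_succ]; exact Nat.mul_div_cancel _ hN
      have h2 : N^(m+1) % N = 0 := by rw [pow_succ]; exact Nat.mul_mod_left _ _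
      rw [h1, h2, hc0, ih]
  -- consecutive grid points at level m are at distance at most ρ^m * d
  have L3 : ∀ m k, 1 ≤ k → k ≤ N^m → dist (g m (k-1)) (g m k) ≤ ρ^m * d := by
    intro m
    induction m with
    | zero =>
      intro k h1 h2
      have hk : k = 1 := le_antisymm (by simpa using h2) h1
      subst hk
      simp [hgz, hd]
    | succ m ih =>
      intro k h1 h2
      rcases Nat.eq_zero_or_pos (k % N) with hr | hr
      · -- k is a multiple of N
        obtain ⟨q, rfl⟩ : N ∣ k := Nat.dvd_of_mod_eq_zero hr
        have hq1 : 1 ≤ q := by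
          rcases Nat.eq_zero_or_pos q with h | h
          · subst h; simp at h1
          · exact h
        obtain ⟨a, rfl⟩ : ∃ a, q = a + 1 := ⟨q - 1, by omega⟩
        have hqN : a + 1 ≤ N^m := by
          have h3 : N * (a+1) ≤ N * N^m := by
            calc N * (a+1) ≤ N^(m+1) := h2
            _ = N * N^m := by ring
          exact Nat.le_of_mul_le_mul_left h3 hN
        have e1 : N * (a+1) - 1 = N*a + (N-1) := by
          rw [Nat.mul_add]; omega
        have e2 : g (m+1) (N*(a+1) - 1) = c (g m a) (g m (a+1)) (N-1) := by
          rw [e1, hgs, Nat.mul_add_div hN, Nat.mul_add_mod,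
            Nat.div_eq_of_lt (by omega), Nat.mod_eq_of_lt (by omega)]
        have e3 : g (m+1) (N*(a+1)) = g m (a+1) := by
          rw [hgs, Nat.mul_div_cancel_left _ hN, Nat.mul_mod_right, hc0]
        rw [e2, e3]
        have h5 := hcstep (g m a) (g m (a+1)) N hN le_rfl
        have h6 : dist (g m a) (g m (a+1)) ≤ ρ^m * d := by
          have := ih (a+1) (by omega) hqN
          simpa using this
        calc dist (c (g m a) (g m (a+1)) (N-1)) (g m (a+1))
            = dist (c (g m a) (g m (a+1)) (N-1)) (c (g m a) (g m (a+1)) N) := by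
              rw [hcN]
          _ ≤ ρ * dist (g m a) (g m (a+1)) := h5
          _ ≤ ρ * (ρ^m * d) := by
              exact mul_le_mul_of_nonneg_left h6 (le_of_lt hρ0)
          _ = ρ^(m+1) * d := by ring
      · -- k is not a multiple of N
        obtain ⟨q, r, rfl, hrN, hr1⟩ : ∃ q r, k = N*q + r ∧ r < N ∧ 1 ≤ r :=
          ⟨k/N, k%N, (Nat.div_add_mod k N).symm, Nat.mod_lt _ hN, hr⟩
        have hqlt : q < N^m := by
          have h3 : N * q < N * N^m := by
            calc N * q < N * q + r := Nat.lt_add_of_pos_right hr1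
            _ ≤ N^(m+1) := h2
            _ = N * N^m := by ring
          exact Nat.lt_of_mul_lt_mul_left h3
        have e1 : N*q + r - 1 = N*q + (r-1) := by omega
        have e2 : g (m+1) (N*q + r - 1) = c (g m q) (g m (q+1)) (r-1) := by
          rw [e1, hgs, Nat.mul_add_div hN, Nat.mul_add_mod,
            Nat.div_eq_of_lt (by omega), Nat.mod_eq_of_lt (by omega)]
        have e3 : g (m+1) (N*q + r) = c (g m q) (g m (q+1)) r := by
          rw [hgs, Nat.mul_add_div hN, Nat.mul_add_mod,
            Nat.div_eq_of_lt hrN, Nat.mod_eq_of_lt hrN]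
        rw [e2, e3]
        have h5 := hcstep (g m q) (g m (q+1)) r hr1 (le_of_lt hrN)
        have h6 : dist (g m q) (g m (q+1)) ≤ ρ^m * d := by
          have := ih (q+1) (by omega) (by omega)
          simpa using this
        calc dist (c (g m q) (g m (q+1)) (r-1)) (c (g m q) (g m (q+1)) r)
            ≤ ρ * dist (g m q) (g m (q+1)) := h5
          _ ≤ ρ * (ρ^m * d) := mul_le_mul_of_nonneg_left h6 (le_of_lt hρ0)
          _ = ρ^(m+1) * d := by ring
  -- telescoping estimate
  have L4 : ∀ m j i, j + i ≤ N^m → dist (g m j) (g m (j+i)) ≤ (i:ℝ) * (ρ^m * d) := by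
    intro m j i
    induction i with
    | zero => simp
    | succ i ih =>
      intro h
      have h' : j + i ≤ N^m := by omega
      have hstep : dist (g m (j+i)) (g m (j+i+1)) ≤ ρ^m * d := by
        have := L3 m (j+i+1) (by omega) (by omega)
        simpa using this
      calc dist (g m j) (g m (j+(i+1)))
          ≤ dist (g m j) (g m (j+i)) + dist (g m (j+i)) (g m (j+i+1)) := by
            have : j + (i+1) = j + i + 1 := by omega
            rw [this]; exact dist_triangle _ _ _
        _ ≤ (i:ℝ) * (ρ^m * d) + ρ^m * d := add_le_add (ih h') hstep
        _ = ((i+1 : ℕ):ℝ) * (ρ^m * d) := by push_cast; ring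
  have L5 : ∀ m k, g (m+1) (N*k) = g m k := by
    intro m k
    rw [hgs, Nat.mul_div_cancel_left _ hN, Nat.mul_mod_right, hc0]
  -- the approximating sequence
  set u : ℕ → ℝ → M := fun m t => g m (⌊t * (N:ℝ)^m⌋₊) with hu
  have hNpos : (0:ℝ) < (N:ℝ) := by linarith
  -- floor facts
  have hfub : ∀ t ∈ Icc (0:ℝ) 1, ∀ m, ⌊t * (N:ℝ)^m⌋₊ ≤ N^m := by
    intro t ht m
    have h1 : t * (N:ℝ)^m ≤ (N:ℝ)^m := by
      have := pow_nonneg (le_of_lt hNpos) m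
      nlinarith [ht.1, ht.2]
    calc ⌊t * (N:ℝ)^m⌋₊ ≤ ⌊(N:ℝ)^m⌋₊ := Nat.floor_le_floor h1
      _ = N^m := by rw [← Nat.cast_pow, Nat.floor_natCast]
  -- step bound
  have L6 : ∀ t ∈ Icc (0:ℝ) 1, ∀ m, dist (u m t) (u (m+1) t) ≤ (N*ρ*d) * ρ^m := by
    intro t ht m
    have ht0 : 0 ≤ t := ht.1
    have hpw : (0:ℝ) ≤ t * (N:ℝ)^m := mul_nonneg ht0 (by positivity)
    have hpw' : (0:ℝ) ≤ t * (N:ℝ)^(m+1) := mul_nonneg ht0 (by positivity)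
    set k := ⌊t * (N:ℝ)^m⌋₊ with hk
    set k' := ⌊t * (N:ℝ)^(m+1)⌋₊ with hk'
    have hle : N * k ≤ k' := by
      apply Nat.le_floor
      push_cast
      have h1 : (k:ℝ) ≤ t * (N:ℝ)^m := Nat.floor_le hpw
      calc ((N:ℝ) * k) = (N:ℝ) * (k:ℝ) := by ring
        _ ≤ (N:ℝ) * (t * (N:ℝ)^m) := by nlinarith
        _ = t * (N:ℝ)^(m+1) := by ring
    have hub : k' ≤ N * k + N := by
      have h2 : t * (N:ℝ)^(m+1) < ((N * k + N : ℕ):ℝ) := by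
        have h3 : t * (N:ℝ)^m < (k:ℝ) + 1 := Nat.lt_floor_add_one _
        push_cast
        calc t * (N:ℝ)^(m+1) = (t * (N:ℝ)^m) * (N:ℝ) := by ring
          _ < ((k:ℝ) + 1) * (N:ℝ) := by nlinarith
          _ = (N:ℝ) * (k:ℝ) + (N:ℝ) := by ring
      have := (Nat.floor_lt hpw').2 h2
      omega
    have hk'ub : k' ≤ N^(m+1) := hfub t ht (m+1)
    have edist : u m t = g (m+1) (N*k) := by
      rw [hu]
      exact (L5 m k).symm
    have e2 : N*k + (k' - N*k) = k' := Nat.add_sub_cancel' hle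
    have hmain := L4 (m+1) (N*k) (k' - N*k) (by rw [e2]; exact hk'ub)
    rw [e2] at hmain
    have hcast : ((k' - N*k : ℕ):ℝ) ≤ (N:ℝ) := by
      have h7 : k' - N*k ≤ N := by
        apply tsub_le_iff_right.2
        calc k' ≤ N*k + N := hub
        _ = N + N*k := Nat.add_comm _ _
      exact_mod_cast h7
    calc dist (u m t) (u (m+1) t) = dist (g (m+1) (N*k)) (g (m+1) k') := by rw [edist]
      _ ≤ ((k' - N*k : ℕ):ℝ) * (ρ^(m+1) * d) := hmain
      _ ≤ (N:ℝ) * (ρ^(m+1) * d) := by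
          apply mul_le_mul_of_nonneg_right hcast
          exact mul_nonneg (pow_nonneg (le_of_lt hρ0) _) hd0
      _ = (N*ρ*d) * ρ^m := by ring
  -- limits exist
  have hex : ∀ t : Icc (0:ℝ) 1, ∃ a : M, Tendsto (fun m => u m t.1) atTop (𝓝 a) := by
    intro t
    exact cauchySeq_tendsto_of_complete
      (cauchySeq_of_le_geometric ρ (N*ρ*d) hρ1 (fun m => L6 t.1 t.2 m))
  choose γf hγf using hex
  have Ltail : ∀ t : Icc (0:ℝ) 1, ∀ m, dist (u m t.1) (γf t) ≤ (N*ρ*d) * ρ^m / (1-ρ) :=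
    fun t m => dist_le_of_le_geometric_of_tendsto ρ (N*ρ*d) hρ1
      (fun m => L6 t.1 t.2 m) (hγf t) m
  -- distance from x to any point of the path
  have Lx : ∀ t : Icc (0:ℝ) 1, dist x (γf t) ≤ (N*ρ*d) / (1-ρ) := by
    intro t
    have h1 : dist x (u 1 t.1) ≤ (N:ℝ) * ρ * d := by
      have hk : ⌊t.1 * (N:ℝ)^1⌋₊ ≤ N := by
        have := hfub t.1 t.2 1
        simpa using this
      have h2 : dist (g 1 0) (g 1 (0 + ⌊t.1 * (N:ℝ)^1⌋₊)) ≤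
          ((⌊t.1 * (N:ℝ)^1⌋₊ : ℕ):ℝ) * (ρ^1 * d) := L4 1 0 _ (by simpa using hk)
      rw [L1 1] at h2
      calc dist x (u 1 t.1) = dist x (g 1 (0 + ⌊t.1 * (N:ℝ)^1⌋₊)) := by
            simp only [hu, zero_add]
        _ ≤ ((⌊t.1 * (N:ℝ)^1⌋₊ : ℕ):ℝ) * (ρ^1 * d) := h2
        _ ≤ (N:ℝ) * (ρ^1 * d) := by
            apply mul_le_mul_of_nonneg_right _ (mul_nonneg (pow_nonneg (le_of_lt hρ0) _) hd0)
            exact_mod_cast hk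
        _ = (N:ℝ) * ρ * d := by ring
    have h2 : dist (u 1 t.1) (γf t) ≤ (N*ρ*d) * ρ^1 / (1-ρ) := Ltail t 1
    have hNρd : (0:ℝ) ≤ N*ρ*d := mul_nonneg (mul_nonneg (Nat.cast_nonneg N) (le_of_lt hρ0)) hd0
    calc dist x (γf t) ≤ dist x (u 1 t.1) + dist (u 1 t.1) (γf t) := dist_triangle _ _ _
      _ ≤ (N:ℝ)*ρ*d + (N*ρ*d) * ρ^1 / (1-ρ) := add_le_add h1 h2
      _ = (N*ρ*d) / (1-ρ) := by
          rw [pow_one]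
          field_simp
          ring
  -- endpoints
  have hstart : γf ⟨0, by norm_num⟩ = x := by
    have h0 : ∀ m, u m (0:ℝ) = x := by
      intro m
      rw [hu]
      simp [L1]
    have h1 := hγf ⟨0, by norm_num⟩
    have h2 : (fun m => u m ((⟨0, by norm_num⟩ : Icc (0:ℝ) 1) : ℝ)) = fun _ => x :=
      funext fun m => h0 m
    rw [h2] at h1
    exact (tendsto_nhds_unique h1 tendsto_const_nhds)
  have hend : γf ⟨1, by norm_num⟩ = x' := by
    have h0 : ∀ m, u m (1:ℝ) = x' := by
      intro m
      rw [hu]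
      have : ⌊(1:ℝ) * (N:ℝ)^m⌋₊ = N^m := by
        rw [one_mul, ← Nat.cast_pow, Nat.floor_natCast]
      simp only [this, L2]
    have h1 := hγf ⟨1, by norm_num⟩
    have h2 : (fun m => u m ((⟨1, by norm_num⟩ : Icc (0:ℝ) 1) : ℝ)) = fun _ => x' :=
      funext fun m => h0 m
    rw [h2] at h1
    exact (tendsto_nhds_unique h1 tendsto_const_nhds)
  -- uniform-continuity type estimate
  have key : ∀ s t : Icc (0:ℝ) 1, ∀ m, s.1 ≤ t.1 → t.1 - s.1 < ((N:ℝ)^m)⁻¹ →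
      dist (u m s.1) (u m t.1) ≤ ρ^m * d := by
    intro s t m hst hlt
    have hs0 : (0:ℝ) ≤ s.1 := s.2.1
    have ht0 : (0:ℝ) ≤ t.1 := t.2.1
    have hNm : (0:ℝ) < (N:ℝ)^m := by positivity
    set ks := ⌊s.1 * (N:ℝ)^m⌋₊ with hks
    set kt := ⌊t.1 * (N:ℝ)^m⌋₊ with hkt
    have h1 : ks ≤ kt := Nat.floor_le_floor (by nlinarith)
    have h2 : kt ≤ ks + 1 := by
      have h3 : t.1 * (N:ℝ)^m < ((ks + 2 : ℕ):ℝ) := by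
        have h4 : s.1 * (N:ℝ)^m < (ks:ℝ) + 1 := Nat.lt_floor_add_one _
        have h5 : t.1 * (N:ℝ)^m < s.1 * (N:ℝ)^m + 1 := by
          have : (t.1 - s.1) * (N:ℝ)^m < 1 := by
            calc (t.1 - s.1) * (N:ℝ)^m < ((N:ℝ)^m)⁻¹ * (N:ℝ)^m := by
                  apply mul_lt_mul_of_pos_right hlt hNm
              _ = 1 := inv_mul_cancel₀ (ne_of_gt hNm)
          nlinarith
        push_cast
        nlinarith
      have := (Nat.floor_lt (mul_nonneg ht0 (by positivity))).2 h3
      omega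
    have hktub : kt ≤ N^m := hfub t.1 t.2 m
    have e2 : ks + (kt - ks) = kt := Nat.add_sub_cancel' h1
    have hmain := L4 m ks (kt - ks) (by rw [e2]; exact hktub)
    rw [e2] at hmain
    calc dist (u m s.1) (u m t.1) = dist (g m ks) (g m kt) := rfl
      _ ≤ ((kt - ks : ℕ):ℝ) * (ρ^m * d) := hmain
      _ ≤ 1 * (ρ^m * d) := by
          apply mul_le_mul_of_nonneg_right _ (mul_nonneg (pow_nonneg (le_of_lt hρ0) _) hd0)
          have : kt - ks ≤ 1 := by omega
          exact_mod_cast this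
      _ = ρ^m * d := one_mul _
  -- continuity
  have hcont : Continuous γf := by
    rw [Metric.continuous_iff]
    intro t ε hε
    set K := d + 2 * (N*ρ*d) / (1-ρ) with hK
    have hK0 : 0 ≤ K := by
      have : (0:ℝ) ≤ 2 * (N*ρ*d) / (1-ρ) := div_nonneg
        (mul_nonneg (by norm_num)
          (mul_nonneg (mul_nonneg (Nat.cast_nonneg N) (le_of_lt hρ0)) hd0))
        (le_of_lt h1ρ)
      rw [hK]
      linarith
    have htend : Tendsto (fun m => ρ^m) atTop (𝓝 0) :=
      tendsto_pow_atTop_nhds_zero_of_lt_one (le_of_lt hρ0) hρ1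
    have htend2 : Tendsto (fun m => K * ρ^m) atTop (𝓝 0) := by
      simpa using htend.const_mul K
    have hev : ∀ᶠ m in atTop, K * ρ^m < ε :=
      htend2.eventually (eventually_lt_nhds hε)
    obtain ⟨m, hm⟩ := hev.exists
    refine ⟨((N:ℝ)^m)⁻¹, by positivity, ?_⟩
    intro s hdist
    have hbound : ∀ s' t' : Icc (0:ℝ) 1, s'.1 ≤ t'.1 → t'.1 - s'.1 < ((N:ℝ)^m)⁻¹ →
        dist (γf s') (γf t') ≤ K * ρ^m := by
      intro s' t' hle hlt
      have h1 := Ltail s' m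
      have h2 := Ltail t' m
      have h3 := key s' t' m hle hlt
      calc dist (γf s') (γf t')
          ≤ dist (γf s') (u m s'.1) + dist (u m s'.1) (u m t'.1) + dist (u m t'.1) (γf t') :=
            dist_triangle4 _ _ _ _
        _ ≤ (N*ρ*d) * ρ^m / (1-ρ) + ρ^m * d + (N*ρ*d) * ρ^m / (1-ρ) := by
            rw [dist_comm (γf s')]
            exact add_le_add (add_le_add h1 h3) h2
        _ = K * ρ^m := by rw [hK]; ring
    have hst : dist s.1 t.1 < ((N:ℝ)^m)⁻¹ := by
      rwa [← Subtype.dist_eq]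
    rcases le_total s.1 t.1 with h | h
    · have : t.1 - s.1 < ((N:ℝ)^m)⁻¹ := by
        rw [Real.dist_eq, abs_sub_lt_iff] at hst
        linarith [hst.2]
      exact lt_of_le_of_lt (hbound s t h this) hm
    · have : s.1 - t.1 < ((N:ℝ)^m)⁻¹ := by
        rw [Real.dist_eq, abs_sub_lt_iff] at hst
        linarith [hst.1]
      calc dist (γf s) (γf t) = dist (γf t) (γf s) := dist_comm _ _
        _ ≤ K * ρ^m := hbound t s h this
        _ < ε := hm
  -- build the path
  refine ⟨⟨⟨γf, hcont⟩, hstart, hend⟩, ?_⟩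
  apply Metric.diam_le_of_forall_dist_le
    (mul_nonneg (div_nonneg (by nlinarith [Nat.cast_nonneg (α := ℝ) N]) (le_of_lt h1ρ)) hd0)
  rintro p ⟨s, rfl⟩ q ⟨t, rfl⟩
  have h1 := Lx s
  have h2 := Lx t
  have hcoe : ∀ r : unitInterval,
      (⟨⟨γf, hcont⟩, hstart, hend⟩ : Path x x') r = γf r := fun r => rfl
  rw [hcoe s, hcoe t]
  calc dist (γf s) (γf t) ≤ dist (γf s) x + dist x (γf t) := dist_triangle _ _ _
    _ ≤ (N*ρ*d) / (1-ρ) + (N*ρ*d) / (1-ρ) := by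
        rw [dist_comm (γf s) x]
        exact add_le_add h1 h2
    _ = (2 * N * ρ / (1 - ρ)) * d := by field_simp; ring
end

section
/- Let M be a metric space and suppose there exist real numbers ρ < 1, ρ > 0 and N ∈ ℕ such that every pair of points of M is joined by a ρ-chain of length N. Set ν = 2Nρ/(1−ρ). Then for every ε > 0 and every pair of points x, x' ∈ M there is a finite sequence x = b_0, b_1, …, b_k = x' with d(b_{i−1}, b_i) ≤ ε for all i, and with d(x, b_i) ≤ ν·d(x,x') for all i. -/
lemma chain_partial_dist {M : Type*} [MetricSpace M] (b : ℕ → M) (g : ℝ) (N : ℕ)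
    (h : ∀ j : ℕ, 1 ≤ j → j ≤ N → dist (b (j - 1)) (b j) ≤ g) :
    ∀ r : ℕ, r ≤ N → dist (b 0) (b r) ≤ r * g := by
  intro r
  induction r with
  | zero => simp
  | succ r ih =>
    intro hr
    have h1 : dist (b r) (b (r + 1)) ≤ g := by
      have := h (r + 1) (by omega) hr
      simpa using this
    calc dist (b 0) (b (r + 1)) ≤ dist (b 0) (b r) + dist (b r) (b (r + 1)) :=
          dist_triangle _ _ _
      _ ≤ r * g + g := add_le_add (ih (by omega)) h1
      _ = ((r : ℕ) + 1 : ℕ) * g := by push_cast; ring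

lemma refine_chains {M : Type*} [MetricSpace M]
    (ρ : ℝ) (hρ0 : 0 < ρ) (N : ℕ) (hN : 1 ≤ N)
    (hchain : ∀ x x' : M, ∃ b : ℕ → M, b 0 = x ∧ b N = x' ∧
      ∀ j : ℕ, 1 ≤ j → j ≤ N → dist (b (j - 1)) (b j) ≤ ρ * dist x x') :
    ∀ n : ℕ, ∀ x x' : M, ∃ k : ℕ, ∃ b : ℕ → M, b 0 = x ∧ b k = x' ∧
      (∀ i : ℕ, 1 ≤ i → i ≤ k → dist (b (i - 1)) (b i) ≤ ρ ^ (n + 1) * dist x x') ∧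
      ∀ i : ℕ, i ≤ k → dist x (b i) ≤ (∑ j ∈ Finset.range (n + 1), N * ρ ^ (j + 1)) * dist x x' := by
  intro n
  induction n with
  | zero =>
    intro x x'
    obtain ⟨b, hb0, hbN, hgap⟩ := hchain x x'
    refine ⟨N, b, hb0, hbN, ?_, ?_⟩
    · intro i h1 h2; simpa using hgap i h1 h2
    · intro i hi
      have := chain_partial_dist b (ρ * dist x x') N hgap i hi
      rw [hb0] at this
      calc dist x (b i) ≤ i * (ρ * dist x x') := this
        _ ≤ N * (ρ * dist x x') := by
            apply mul_le_mul_of_nonneg_right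
            · exact_mod_cast hi
            · positivity
        _ = (∑ j ∈ Finset.range (0 + 1), N * ρ ^ (j + 1)) * dist x x' := by
            simp; ring
  | succ n ih =>
    intro x x'
    obtain ⟨k, b, hb0, hbk, hgap, hpt⟩ := ih x x'
    choose c hc0 hcN hcgap using fun i => hchain (b i) (b (i + 1))
    set D := dist x x' with hD
    have hD0 : 0 ≤ D := dist_nonneg
    have hN0 : 0 < N := hN
    have hsub : ∀ i, i < k → ∀ j : ℕ, 1 ≤ j → j ≤ N →
        dist (c i (j - 1)) (c i j) ≤ ρ ^ (n + 2) * D := by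
      intro i hik j h1 h2
      have h3 := hcgap i j h1 h2
      have h4 : dist (b i) (b (i + 1)) ≤ ρ ^ (n + 1) * D := by
        have := hgap (i + 1) (by omega) (by omega)
        simpa using this
      calc dist (c i (j - 1)) (c i j) ≤ ρ * dist (b i) (b (i + 1)) := h3
        _ ≤ ρ * (ρ ^ (n + 1) * D) := mul_le_mul_of_nonneg_left h4 hρ0.le
        _ = ρ ^ (n + 2) * D := by ring
    have hkN : k * N = N * k := Nat.mul_comm k N
    refine ⟨k * N, fun j => if j < k * N then c (j / N) (j % N) else x', ?_, ?_, ?_, ?_⟩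
    · by_cases hk : k = 0
      · subst hk
        simp only [Nat.zero_mul, Nat.lt_irrefl, if_false]
        rw [← hbk, hb0]
      · have hkn0 : 0 < k * N := Nat.mul_pos (Nat.pos_of_ne_zero hk) hN0
        simp only [if_pos hkn0]
        simpa using (hc0 0).trans hb0
    · simp
    · intro j h1 h2
      simp only
      set i := (j - 1) / N with hi
      set r := (j - 1) % N with hr
      have hrN : r < N := Nat.mod_lt _ hN0
      have hdiv : N * i + r = j - 1 := Nat.div_add_mod (j - 1) N
      have hik : i < k := (Nat.div_lt_iff_lt_mul hN0).mpr (by omega : j - 1 < k * N)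
      have hB1 : (if j - 1 < k * N then c ((j - 1) / N) ((j - 1) % N) else x') = c i r := by
        rw [if_pos (by omega)]
      rw [hB1]
      by_cases hcase : r + 1 < N
      · have hj : j = N * i + (r + 1) := by omega
        have hdivj : j / N = i := by
          rw [hj, Nat.mul_add_div hN0, Nat.div_eq_of_lt hcase, Nat.add_zero]
        have hmodj : j % N = r + 1 := by
          rw [hj, Nat.mul_add_mod, Nat.mod_eq_of_lt hcase]
        have hjlt : j < k * N := (Nat.div_lt_iff_lt_mul hN0).mp (by rw [hdivj]; exact hik)
        rw [if_pos hjlt, hdivj, hmodj]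
        simpa using hsub i hik (r + 1) (by omega) (by omega)
      · have hms : N * (i + 1) = N * i + N := by ring
        have hj : j = N * (i + 1) := by omega
        have hBj : (if j < k * N then c (j / N) (j % N) else x') = c i N := by
          by_cases hjlt : j < k * N
          · rw [if_pos hjlt, hj, Nat.mul_div_cancel_left _ hN0, Nat.mul_mod_right, hc0, hcN]
          · rw [if_neg hjlt]
            have hik1 : i + 1 = k := by
              by_contra h
              have h2' : i + 1 < k := by omega
              have h3 : j / N < k := by
                rw [hj, Nat.mul_div_cancel_left _ hN0]; exact h2'
              exact hjlt ((Nat.div_lt_iff_lt_mul hN0).mp h3)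
            rw [hcN, hik1, hbk]
        rw [hBj]
        have hfin := hsub i hik N hN0 (le_refl N)
        have heq : N - 1 = r := by omega
        rw [heq] at hfin
        exact hfin
    · intro j hj
      simp only
      by_cases hjlt : j < k * N
      · rw [if_pos hjlt]
        set i := j / N with hi
        set r := j % N with hr
        have hrN : r < N := Nat.mod_lt _ hN0
        have hik : i < k := (Nat.div_lt_iff_lt_mul hN0).mpr hjlt
        have h1 : dist x (b i) ≤ (∑ l ∈ Finset.range (n + 1), N * ρ ^ (l + 1)) * D :=
          hpt i (by omega)
        have h2 : dist (b i) (c i r) ≤ r * (ρ * dist (b i) (b (i + 1))) := by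
          have := chain_partial_dist (c i) (ρ * dist (b i) (b (i + 1))) N (hcgap i) r hrN.le
          rwa [hc0] at this
        have h3 : dist (b i) (b (i + 1)) ≤ ρ ^ (n + 1) * D := by
          have := hgap (i + 1) (Nat.succ_le_succ (Nat.zero_le i)) hik
          simpa using this
        have h4 : dist (b i) (c i r) ≤ N * ρ ^ (n + 2) * D := by
          calc dist (b i) (c i r) ≤ r * (ρ * dist (b i) (b (i + 1))) := h2
            _ ≤ N * (ρ * (ρ ^ (n + 1) * D)) := by
                apply mul_le_mul (by exact_mod_cast hrN.le)
                · exact mul_le_mul_of_nonneg_left h3 hρ0.le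
                · positivity
                · positivity
            _ = N * ρ ^ (n + 2) * D := by ring
        calc dist x (c i r) ≤ dist x (b i) + dist (b i) (c i r) := dist_triangle _ _ _
          _ ≤ (∑ l ∈ Finset.range (n + 1), N * ρ ^ (l + 1)) * D + N * ρ ^ (n + 2) * D :=
              add_le_add h1 h4
          _ = (∑ l ∈ Finset.range (n + 2), N * ρ ^ (l + 1)) * D := by
              simp only [Finset.sum_range_succ]; ring
      · rw [if_neg hjlt]
        have h1 : dist x (b k) ≤ (∑ l ∈ Finset.range (n + 1), N * ρ ^ (l + 1)) * D :=
          hpt k (le_refl k)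
        rw [hbk] at h1
        refine h1.trans (mul_le_mul_of_nonneg_right ?_ hD0)
        have hstep : (∑ l ∈ Finset.range (n + 1 + 1), (N:ℝ) * ρ ^ (l + 1))
            = (∑ l ∈ Finset.range (n + 1), (N:ℝ) * ρ ^ (l + 1)) + N * ρ ^ (n + 1 + 1) :=
          Finset.sum_range_succ _ _
        have hnn : (0:ℝ) ≤ N * ρ ^ (n + 1 + 1) := by positivity
        rw [hstep]
        linarith

/-- If `M` is a metric space and there are `0 < ρ < 1` and `N : ℕ` such that every
pair of points is joined by a `ρ`-chain of length `N`, then, with `ν = 2 * N * ρ / (1 - ρ)`, for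
every `ε > 0` and all `x, x'` there is a finite sequence `x = b 0, …, b k = x'` whose consecutive
gaps are at most `ε` and all of whose points lie within distance `ν * dist x x'` of `x`. -/
theorem fine_chains_of_chains
    {M : Type*} [MetricSpace M]
    (ρ : ℝ) (hρ0 : 0 < ρ) (hρ1 : ρ < 1) (N : ℕ)
    (hchain : ∀ x x' : M, ∃ b : ℕ → M, b 0 = x ∧ b N = x' ∧
      ∀ j : ℕ, 1 ≤ j → j ≤ N → dist (b (j - 1)) (b j) ≤ ρ * dist x x') :
    ∀ ε > (0 : ℝ), ∀ x x' : M, ∃ k : ℕ, ∃ b : ℕ → M, b 0 = x ∧ b k = x' ∧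
      (∀ i : ℕ, 1 ≤ i → i ≤ k → dist (b (i - 1)) (b i) ≤ ε) ∧
      ∀ i : ℕ, i ≤ k → dist x (b i) ≤ (2 * N * ρ / (1 - ρ)) * dist x x' := by
  intro ε hε x x'
  by_cases hD : dist x x' = 0
  · have hxx : x = x' := by rwa [dist_eq_zero] at hD
    refine ⟨0, fun _ => x, rfl, hxx, ?_, ?_⟩
    · intro i h1 h2; omega
    · intro i hi
      simp [hD]
  · have hDpos : 0 < dist x x' := lt_of_le_of_ne dist_nonneg (Ne.symm hD)
    have hNρ : 1 ≤ N * ρ := by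
      obtain ⟨b, hb0, hbN, hgap⟩ := hchain x x'
      have := chain_partial_dist b (ρ * dist x x') N hgap N (le_refl N)
      rw [hb0, hbN] at this
      nlinarith
    have hN : 1 ≤ N := by
      by_contra h
      have hN0 : N = 0 := by omega
      rw [hN0] at hNρ
      norm_num at hNρ
    obtain ⟨n, hn⟩ : ∃ n : ℕ, ρ ^ (n + 1) * dist x x' ≤ ε := by
      have htend : Filter.Tendsto (fun n : ℕ => ρ ^ n) Filter.atTop (nhds 0) :=
        tendsto_pow_atTop_nhds_zero_of_lt_one hρ0.le hρ1
      have hev : ∀ᶠ n : ℕ in Filter.atTop, ρ ^ n < ε / dist x x' :=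
        htend.eventually_lt_const (div_pos hε hDpos)
      obtain ⟨m, hm⟩ := hev.exists
      refine ⟨m, ?_⟩
      have h1 : ρ ^ (m + 1) ≤ ρ ^ m :=
        pow_le_pow_of_le_one hρ0.le hρ1.le (by omega)
      have h2 : ρ ^ m * dist x x' ≤ ε := (le_div_iff₀ hDpos).1 hm.le
      calc ρ ^ (m + 1) * dist x x' ≤ ρ ^ m * dist x x' :=
            mul_le_mul_of_nonneg_right h1 dist_nonneg
        _ ≤ ε := h2
    obtain ⟨k, b, hb0, hbk, hgap, hpt⟩ := refine_chains ρ hρ0 N hN hchain n x x'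
    refine ⟨k, b, hb0, hbk, ?_, ?_⟩
    · intro i h1 h2
      exact (hgap i h1 h2).trans hn
    · intro i hi
      refine (hpt i hi).trans (mul_le_mul_of_nonneg_right ?_ dist_nonneg)
      have hsum : (∑ j ∈ Finset.range (n + 1), (N : ℝ) * ρ ^ (j + 1))
          = N * ρ * ∑ j ∈ Finset.range (n + 1), ρ ^ j := by
        rw [Finset.mul_sum]
        apply Finset.sum_congr rfl
        intro j _
        ring
      rw [hsum]
      have h1ρ : (0:ℝ) < 1 - ρ := by linarith
      have hgeom : ∑ j ∈ Finset.range (n + 1), ρ ^ j ≤ 1 / (1 - ρ) := by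
        rw [geom_sum_eq hρ1.ne, le_div_iff₀ h1ρ]
        have heq : (ρ ^ (n + 1) - 1) / (ρ - 1) * (1 - ρ) = 1 - ρ ^ (n + 1) := by
          field_simp [sub_ne_zero.mpr hρ1.ne]
          ring
        rw [heq]
        have := pow_nonneg hρ0.le (n + 1)
        linarith
      have hNρ0 : (0:ℝ) ≤ N * ρ := by positivity
      calc (N:ℝ) * ρ * ∑ j ∈ Finset.range (n + 1), ρ ^ j
          ≤ N * ρ * (1 / (1 - ρ)) := mul_le_mul_of_nonneg_left hgeom hNρ0
        _ ≤ 2 * N * ρ / (1 - ρ) := by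
            rw [div_eq_mul_inv, div_eq_mul_inv]
            have h1ρ : (0:ℝ) < 1 - ρ := by linarith
            have hinv : (0:ℝ) ≤ (1 - ρ)⁻¹ := by positivity
            nlinarith
end

section
/- Let X be a proper geodesic δ-hyperbolic metric space (four-point condition). Suppose there is a group G acting on X by isometries and a compact set K ⊆ X whose G-translates cover X, and suppose X contains a bi-infinite geodesic (an isometric embedding ℝ → X). Then geodesics in X are almost extendable: there exists a constant C such that for all points p, q ∈ X there is a geodesic ray based at p whose image meets the closed ball of radius C about q. -/
open Set Filter Metric Topology
open scoped Pointwise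

/-- The Gromov product `(x|y)_p = ½(d(x,p) + d(y,p) − d(x,y))`. -/
noncomputable def gromovProd {X : Type*} [MetricSpace X] (p x y : X) : ℝ :=
  (dist x p + dist y p - dist x y) / 2

/-- `X` is `δ`-hyperbolic in the four-point sense. -/
def DeltaHyperbolic (X : Type*) [MetricSpace X] (δ : ℝ) : Prop :=
  ∀ w x y z : X, min (gromovProd w x z) (gromovProd w z y) - δ ≤ gromovProd w x y

/-- `X` is a geodesic space: every pair of points is joined by a geodesic segment. -/
def IsGeodesicSpace (X : Type*) [MetricSpace X] : Prop :=
  ∀ x y : X, ∃ γ : ℝ → X, γ 0 = x ∧ γ (dist x y) = y ∧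
    ∀ s ∈ Icc 0 (dist x y), ∀ t ∈ Icc 0 (dist x y), dist (γ s) (γ t) = |s - t|

/-- `c : ℝ → X` is a geodesic ray based at `p`: it is an isometric embedding on `[0,∞)`
with `c 0 = p`. -/
def IsGeodesicRay {X : Type*} [MetricSpace X] (c : ℝ → X) (p : X) : Prop :=
  c 0 = p ∧ ∀ s ∈ Ici (0 : ℝ), ∀ t ∈ Ici (0 : ℝ), dist (c s) (c t) = |s - t|

private lemma gromovProd_swap {X : Type*} [MetricSpace X] (w x y : X) :
    gromovProd w x y = gromovProd w y x := by
  unfold gromovProd; rw [dist_comm x y]; ring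

/-- In a δ-hyperbolic space, any geodesic from `x` to `y` contains a point at distance at
most `(x|y)_m + 2δ` from any point `m`. -/
private lemma exists_near_proj {X : Type*} [MetricSpace X] {δ : ℝ}
    (hhyp : DeltaHyperbolic X δ) (x y m : X) (γ : ℝ → X)
    (hx : γ 0 = x) (hy : γ (dist x y) = y)
    (hγ : ∀ s ∈ Icc 0 (dist x y), ∀ t ∈ Icc 0 (dist x y), dist (γ s) (γ t) = |s - t|) :
    ∃ t ∈ Icc 0 (dist x y), dist m (γ t) ≤ gromovProd m x y + 2 * δ := by
  have tri1 : dist y m ≤ dist y x + dist x m := dist_triangle y x m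
  have tri2 : dist x m ≤ dist x y + dist y m := dist_triangle x y m
  have e1 : dist y x = dist x y := dist_comm y x
  have e2 : dist x m = dist m x := dist_comm x m
  have e3 : dist y m = dist m y := dist_comm y m
  set t0 : ℝ := gromovProd x y m with ht0
  have ht0' : t0 = (dist y x + dist m x - dist y m) / 2 := rfl
  have h0 : 0 ≤ t0 := by rw [ht0']; linarith [e1, e2, e3]
  have h1 : t0 ≤ dist x y := by rw [ht0']; linarith [e1, e2, e3]
  have hmem : t0 ∈ Icc 0 (dist x y) := ⟨h0, h1⟩
  have hz0 : dist (γ t0) x = t0 := by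
    rw [← hx, hγ t0 hmem 0 ⟨le_refl 0, dist_nonneg⟩, sub_zero, abs_of_nonneg h0]
  have hzy : dist (γ t0) y = dist x y - t0 := by
    have h := hγ t0 hmem (dist x y) ⟨dist_nonneg, le_refl _⟩
    rw [hy] at h
    rw [h, abs_of_nonpos (by linarith)]
    ring
  have hyp := hhyp (γ t0) x y m
  have gxy : gromovProd (γ t0) x y = 0 := by
    unfold gromovProd
    rw [dist_comm x (γ t0), dist_comm y (γ t0), hz0, hzy]; ring
  rw [gxy] at hyp
  have hmin : min (gromovProd (γ t0) x m) (gromovProd (γ t0) m y) ≤ δ := by linarith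
  refine ⟨t0, hmem, ?_⟩
  rcases le_total (gromovProd (γ t0) x m) (gromovProd (γ t0) m y) with h | h
  · have h' : gromovProd (γ t0) x m ≤ δ := by rw [min_eq_left h] at hmin; exact hmin
    have h'' : (dist x (γ t0) + dist m (γ t0) - dist x m) / 2 ≤ δ := h'
    rw [dist_comm x (γ t0), hz0] at h''
    show dist m (γ t0) ≤ (dist x m + dist y m - dist x y) / 2 + 2 * δ
    linarith [ht0', e1, e2, e3]
  · have h' : gromovProd (γ t0) m y ≤ δ := by rw [min_eq_right h] at hmin; exact hmin
    have h'' : (dist m (γ t0) + dist y (γ t0) - dist m y) / 2 ≤ δ := h'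
    rw [dist_comm y (γ t0), hzy] at h''
    show dist m (γ t0) ≤ (dist x m + dist y m - dist x y) / 2 + 2 * δ
    linarith [ht0', e1, e2, e3]

private lemma clip_lipschitz (ℓ : ℝ) (s u : ℝ) :
    |max 0 (min s ℓ) - max 0 (min u ℓ)| ≤ |s - u| := by
  have h1 : |max 0 (min s ℓ) - max 0 (min u ℓ)| ≤ |min s ℓ - min u ℓ| := by
    rw [max_comm 0 (min s ℓ), max_comm 0 (min u ℓ)]
    exact abs_max_sub_max_le_abs _ _ _
  have h2 : |min s ℓ - min u ℓ| ≤ max |s - u| |ℓ - ℓ| := abs_min_sub_min_le_max s ℓ u ℓ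
  simp only [sub_self, abs_zero] at h2
  calc |max 0 (min s ℓ) - max 0 (min u ℓ)| ≤ |min s ℓ - min u ℓ| := h1
    _ ≤ max |s - u| 0 := h2
    _ = |s - u| := max_eq_left (abs_nonneg _)

/-- If `X` is a proper geodesic `δ`-hyperbolic space, `G` acts on `X` by
isometries with a compact set `K` whose translates cover `X`, and `X` contains a bi-infinite
geodesic (an isometric embedding `ℝ → X`), then geodesics in `X` are almost extendable: there is
`C` such that for all `p, q ∈ X` some geodesic ray based at `p` meets the closed ball of radius
`C` about `q`. -/
theorem almost_extendable_of_cocompact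
    {X : Type*} {G : Type*} [MetricSpace X] [ProperSpace X]
    [Group G] [MulAction G X] [IsIsometricSMul G X]
    (δ : ℝ) (hδ : 0 ≤ δ) (hgeo : IsGeodesicSpace X) (hhyp : DeltaHyperbolic X δ)
    (K : Set X) (hK : IsCompact K) (hcover : ⋃ g : G, g • K = univ)
    (line : ℝ → X) (hline : Isometry line) :
    ∃ C : ℝ, ∀ p q : X, ∃ c : ℝ → X, IsGeodesicRay c p ∧
      ∃ t ≥ (0 : ℝ), c t ∈ closedBall q C := by
  obtain ⟨r, hr⟩ : ∃ r : ℝ, K ⊆ closedBall (line 0) r :=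
    hK.isBounded.subset_closedBall (line 0)
  set R : ℝ := max r 0 with hRdef
  have hR0 : (0 : ℝ) ≤ R := le_max_right _ _
  have hrK : K ⊆ closedBall (line 0) R :=
    hr.trans (closedBall_subset_closedBall (le_max_left _ _))
  set C : ℝ := 3 * δ + R with hCdef
  refine ⟨C, fun p q => ?_⟩
  have hq : q ∈ ⋃ g : G, g • K := hcover ▸ mem_univ q
  obtain ⟨g, hgq⟩ := mem_iUnion.1 hq
  obtain ⟨k, hkK, hgk⟩ := hgq
  set L : ℝ → X := fun t => g • line t with hLdef
  have hL : ∀ s t : ℝ, dist (L s) (L t) = |s - t| := by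
    intro s t
    simp only [hLdef, dist_smul]
    exact hline.dist_eq s t
  set m : X := L 0 with hm
  have hmq : dist m q ≤ R := by
    rw [hm, ← hgk, hLdef]
    simp only [dist_smul]
    have h := hrK hkK
    rw [mem_closedBall] at h
    rw [dist_comm]; exact h
  set D : ℝ := dist p q + R with hD
  set T : ℝ := dist p q + C with hT
  have hmp : dist m p ≤ D := by
    rw [hD]
    calc dist m p ≤ dist m q + dist q p := dist_triangle m q p
      _ ≤ R + dist q p := by linarith
      _ = dist p q + R := by rw [dist_comm q p]; ring
  have main : ∀ n : ℕ, ∃ (f : ℝ → X) (t : ℝ), f 0 = p ∧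
      (∀ s u : ℝ, dist (f s) (f u) ≤ |s - u|) ∧
      (∀ s ∈ Icc 0 ((n : ℝ) - D), ∀ u ∈ Icc 0 ((n : ℝ) - D), dist (f s) (f u) = |s - u|) ∧
      t ∈ Icc 0 T ∧ dist (f t) q ≤ C := by
    intro n
    have d1 : dist (L (n : ℝ)) m = (n : ℝ) := by
      rw [hm, hL, sub_zero, abs_of_nonneg (Nat.cast_nonneg n)]
    have d2 : dist (L (-(n : ℝ))) m = (n : ℝ) := by
      rw [hm, hL, sub_zero, abs_neg, abs_of_nonneg (Nat.cast_nonneg n)]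
    have d3 : dist (L (n : ℝ)) (L (-(n : ℝ))) = 2 * (n : ℝ) := by
      rw [hL, sub_neg_eq_add]
      rw [abs_of_nonneg (by positivity : (0:ℝ) ≤ (n : ℝ) + (n : ℝ))]
      ring
    have hab : gromovProd m (L (n : ℝ)) (L (-(n : ℝ))) = 0 := by
      unfold gromovProd
      rw [d1, d2, d3]; ring
    have hmin := hhyp m (L (n : ℝ)) (L (-(n : ℝ))) p
    rw [hab] at hmin
    have key : ∃ e : X, gromovProd m p e ≤ δ ∧ dist m e = (n : ℝ) := by
      rcases le_total (gromovProd m (L (n : ℝ)) p) (gromovProd m p (L (-(n : ℝ)))) with h | h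
      · refine ⟨L (n : ℝ), ?_, by rw [dist_comm]; exact d1⟩
        rw [gromovProd_swap]
        rw [min_eq_left h] at hmin
        linarith
      · refine ⟨L (-(n : ℝ)), ?_, by rw [dist_comm]; exact d2⟩
        rw [min_eq_right h] at hmin
        linarith
    obtain ⟨e, he1, he2⟩ := key
    obtain ⟨γ, hγ0, hγe, hγiso⟩ := hgeo p e
    set ℓ : ℝ := dist p e with hℓ
    have hℓ0 : (0 : ℝ) ≤ ℓ := dist_nonneg
    have hℓn : (n : ℝ) - D ≤ ℓ := by
      have h1 : dist m e ≤ dist m p + dist p e := dist_triangle m p e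
      rw [he2] at h1
      linarith
    obtain ⟨t, htmem, htdist⟩ := exists_near_proj hhyp p e m γ hγ0 hγe hγiso
    have htq : dist (γ t) q ≤ C := by
      have h1 : dist (γ t) q ≤ dist (γ t) m + dist m q := dist_triangle (γ t) m q
      have h2 : dist (γ t) m = dist m (γ t) := dist_comm _ _
      rw [hCdef]
      linarith [he1, htdist, hmq, h2 ▸ h1]
    have htp : dist (γ t) p = t := by
      rw [← hγ0, hγiso t htmem 0 ⟨le_refl 0, hℓ0⟩, sub_zero, abs_of_nonneg htmem.1]
    have htT : t ≤ T := by
      have h1 : dist (γ t) p ≤ dist (γ t) q + dist q p := dist_triangle (γ t) q p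
      rw [htp, dist_comm q p] at h1
      rw [hT]
      linarith
    have hclip : ∀ s ∈ Icc (0:ℝ) ℓ, max 0 (min s ℓ) = s := by
      intro s hs
      rw [min_eq_left hs.2, max_eq_right hs.1]
    refine ⟨fun s => γ (max 0 (min s ℓ)), t, ?_, ?_, ?_, ⟨htmem.1, htT⟩, ?_⟩
    · show γ (max 0 (min 0 ℓ)) = p
      rw [hclip 0 ⟨le_refl 0, hℓ0⟩, hγ0]
    · intro s u
      have hs : max 0 (min s ℓ) ∈ Icc 0 ℓ :=
        ⟨le_max_left _ _, max_le hℓ0 (min_le_right _ _)⟩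
      have hu : max 0 (min u ℓ) ∈ Icc 0 ℓ :=
        ⟨le_max_left _ _, max_le hℓ0 (min_le_right _ _)⟩
      rw [hγiso _ hs _ hu]
      exact clip_lipschitz ℓ s u
    · intro s hs u hu
      have hs' : s ∈ Icc 0 ℓ := ⟨hs.1, hs.2.trans hℓn⟩
      have hu' : u ∈ Icc 0 ℓ := ⟨hu.1, hu.2.trans hℓn⟩
      show dist (γ (max 0 (min s ℓ))) (γ (max 0 (min u ℓ))) = |s - u|
      rw [hclip s hs', hclip u hu']
      exact hγiso s hs' u hu'
    · show dist (γ (max 0 (min t ℓ))) q ≤ C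
      rw [hclip t htmem]
      exact htq
  choose f tn hf using main
  have hf0 : ∀ n, f n 0 = p := fun n => (hf n).1
  have hlip : ∀ (n : ℕ) (s u : ℝ), dist (f n s) (f n u) ≤ |s - u| := fun n => (hf n).2.1
  have heqd : ∀ (n : ℕ), ∀ s ∈ Icc 0 ((n : ℝ) - D), ∀ u ∈ Icc 0 ((n : ℝ) - D),
      dist (f n s) (f n u) = |s - u| := fun n => (hf n).2.2.1
  have htn : ∀ n, tn n ∈ Icc 0 T := fun n => (hf n).2.2.2.1
  have hfq : ∀ n, dist (f n (tn n)) q ≤ C := fun n => (hf n).2.2.2.2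
  set U : Ultrafilter ℕ := Ultrafilter.of atTop with hU
  have hUtop : (U : Filter ℕ) ≤ (atTop : Filter ℕ) := Ultrafilter.of_le _
  have hconv : ∀ t : ℝ, ∃ x : X, Tendsto (fun n => f n t) (U : Filter ℕ) (𝓝 x) := by
    intro t
    have hball : ∀ n, f n t ∈ closedBall p |t| := by
      intro n
      rw [mem_closedBall]
      calc dist (f n t) p = dist (f n t) (f n 0) := by rw [hf0]
        _ ≤ |t - 0| := hlip n t 0
        _ = |t| := by rw [sub_zero]
    have h1 : (U.map (fun n => f n t) : Filter X) ≤ 𝓟 (closedBall p |t|) := by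
      rw [Ultrafilter.coe_map, le_principal_iff, mem_map]
      exact univ_mem' hball
    obtain ⟨x, _, hx⟩ := (isCompact_closedBall p |t|).ultrafilter_le_nhds _ h1
    rw [Ultrafilter.coe_map] at hx
    exact ⟨x, hx⟩
  choose c hc using hconv
  have hray : ∀ s ∈ Ici (0:ℝ), ∀ u ∈ Ici (0:ℝ), dist (c s) (c u) = |s - u| := by
    intro s hs u hu
    have h1 : Tendsto (fun n => dist (f n s) (f n u)) (U : Filter ℕ)
        (𝓝 (dist (c s) (c u))) := (hc s).dist (hc u)
    have h2' : ∀ᶠ n in (atTop : Filter ℕ), dist (f n s) (f n u) = |s - u| := by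
      rw [eventually_atTop]
      obtain ⟨N, hN⟩ := exists_nat_ge (max s u + D)
      refine ⟨N, fun n hn => ?_⟩
      have hNn : (N : ℝ) ≤ (n : ℝ) := Nat.cast_le.2 hn
      have hsn : s ≤ (n : ℝ) - D := by
        have := le_max_left s u; linarith
      have hun : u ≤ (n : ℝ) - D := by
        have := le_max_right s u; linarith
      exact heqd n s ⟨hs, hsn⟩ u ⟨hu, hun⟩
    have h2 : ∀ᶠ n in (U : Filter ℕ), dist (f n s) (f n u) = |s - u| :=
      h2'.filter_mono hUtop
    have h3 : Tendsto (fun n => dist (f n s) (f n u)) (U : Filter ℕ) (𝓝 |s - u|) :=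
      Tendsto.congr' (by filter_upwards [h2] with n h using h.symm) tendsto_const_nhds
    exact tendsto_nhds_unique h1 h3
  have hc0 : c 0 = p := by
    have h1 : Tendsto (fun n => f n 0) (U : Filter ℕ) (𝓝 (c 0)) := hc 0
    have h2 : Tendsto (fun n => f n 0) (U : Filter ℕ) (𝓝 p) := by
      simp only [hf0]; exact tendsto_const_nhds
    exact tendsto_nhds_unique h1 h2
  have hconvt : ∃ t' : ℝ, Tendsto tn (U : Filter ℕ) (𝓝 t') := by
    have h1 : (U.map tn : Filter ℝ) ≤ 𝓟 (Icc 0 T) := by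
      rw [Ultrafilter.coe_map, le_principal_iff, mem_map]
      exact univ_mem' htn
    obtain ⟨t', _, ht'⟩ := (isCompact_Icc (a := (0:ℝ)) (b := T)).ultrafilter_le_nhds _ h1
    rw [Ultrafilter.coe_map] at ht'
    exact ⟨t', ht'⟩
  obtain ⟨t', ht'⟩ := hconvt
  have ht'0 : (0 : ℝ) ≤ t' := ge_of_tendsto ht' (Eventually.of_forall fun n => (htn n).1)
  refine ⟨c, ⟨hc0, hray⟩, t', ht'0, ?_⟩
  rw [mem_closedBall]
  have h1 : Tendsto (fun n => dist (f n t') q) (U : Filter ℕ) (𝓝 (dist (c t') q)) :=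
    (hc t').dist tendsto_const_nhds
  have h2 : Tendsto (fun n => |t' - tn n| + C) (U : Filter ℕ) (𝓝 C) := by
    have : Tendsto (fun n => |t' - tn n| + C) (U : Filter ℕ) (𝓝 (|t' - t'| + C)) :=
      ((tendsto_const_nhds.sub ht').abs).add tendsto_const_nhds
    simpa using this
  have hle : ∀ n, dist (f n t') q ≤ |t' - tn n| + C := by
    intro n
    calc dist (f n t') q ≤ dist (f n t') (f n (tn n)) + dist (f n (tn n)) q :=
        dist_triangle _ _ _
      _ ≤ |t' - tn n| + C := add_le_add (hlip n t' (tn n)) (hfq n)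
  exact le_of_tendsto_of_tendsto' h1 h2 hle
end
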